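/- Let R be a commutative Noetherian ring of Krull dimension d, I an ideal of R, and suppose there is a surjection of R/I-modules from (R/I)^(d+1) onto I/I². Then I is generated by d+1 elements, and moreover any lift of the d+1 generators of I/I² can be corrected modulo I² to give d+1 generators of I. -/

import Mathlib

open Ideal

/-- Coset prime avoidance: there is `μ` such that `a + μ*e` avoids every
minimal prime of `K` not containing `e`. -/
lemma mk_coset_avoid {R : Type*} [CommRing R] [IsNoetherianRing R]
    (K : Ideal R) (e a : R) :
    ∃ μ : R, ∀ p ∈ K.minimalPrimes, e ∉ p → a + μ * e ∉ p := by
  classical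
  have hfin : K.minimalPrimes.Finite := by
    rw [Ideal.minimalPrimes_eq_comap]
    exact (minimalPrimes.finite_of_isNoetherianRing (R ⧸ K)).image _
  have hfinT : {p | p ∈ K.minimalPrimes ∧ e ∉ p ∧ a ∈ p}.Finite :=
    hfin.subset fun p hp => hp.1
  have hfinU : {p | p ∈ K.minimalPrimes ∧ e ∉ p ∧ a ∉ p}.Finite :=
    hfin.subset fun p hp => hp.1
  set T : Finset (Ideal R) := hfinT.toFinset with hT
  set U : Finset (Ideal R) := hfinU.toFinset with hU
  have hmemT : ∀ p, p ∈ T ↔ p ∈ K.minimalPrimes ∧ e ∉ p ∧ a ∈ p := by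
    intro p; rw [hT, Set.Finite.mem_toFinset]; rfl
  have hmemU : ∀ p, p ∈ U ↔ p ∈ K.minimalPrimes ∧ e ∉ p ∧ a ∉ p := by
    intro p; rw [hU, Set.Finite.mem_toFinset]; rfl
  set Kinf : Ideal R := U.inf id with hKinf
  have hnsub : ¬ ((Kinf : Set R) ⊆ ⋃ p ∈ (T : Set (Ideal R)), (p : Set R)) := by
    intro hsub
    obtain ⟨p₀, hp₀T, hle⟩ :=
      (Ideal.subset_union_prime (s := T) (f := id) ⊥ ⊥
        (fun i hi _ _ => ((hmemT i).mp hi).1.1.1)).mp hsub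
    have hp₀ := (hmemT p₀).mp hp₀T
    have hp₀prime : p₀.IsPrime := hp₀.1.1.1
    have hprod : U.prod id ≤ p₀ := le_trans Ideal.prod_le_inf hle
    obtain ⟨q, hqU, hqle⟩ := (hp₀prime.prod_le).mp hprod
    have hq := (hmemU q).mp hqU
    -- by minimality of q ∈ K.minimalPrimes, p₀ ≤ q
    have : p₀ ≤ q := hp₀.1.2 hq.1.1 hqle
    exact hq.2.2 (this hp₀.2.2)
  obtain ⟨μ, hμK, hμT⟩ := Set.not_subset.mp hnsub
  refine ⟨μ, fun p hpmin hep => ?_⟩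
  by_cases hap : a ∈ p
  · -- p ∈ T, so μ ∉ p
    have hpT : p ∈ T := (hmemT p).mpr ⟨hpmin, hep, hap⟩
    have hμp : μ ∉ p := fun h => hμT (Set.mem_biUnion hpT h)
    intro habs
    have : μ * e ∈ p := by
      have := p.sub_mem habs hap; simpa using this
    rcases hpmin.1.1.mul_mem_iff_mem_or_mem.mp this with h | h
    · exact hμp h
    · exact hep h
  · -- p ∈ U, so μ ∈ p
    have hpU : p ∈ U := (hmemU p).mpr ⟨hpmin, hep, hap⟩
    have hμp : μ ∈ p := by
      have : Kinf ≤ p := by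
        rw [hKinf]
        exact Finset.inf_le (α := Ideal R) hpU
      exact this hμK
    intro habs
    have : a ∈ p := by
      have := p.sub_mem habs (p.mul_mem_right e hμp); simpa using this
    exact hap this

/-- Mohan Kumar: if `dim R = d` and `I/I²` is generated by the images of
`f₀, …, f_d`, then these generators lift, modulo `I²`, to `d+1` generators of `I`. -/
theorem stmt_7 {R : Type*} [CommRing R] [IsNoetherianRing R]
    (d : ℕ) (hd : ringKrullDim R = (d : WithBot ℕ∞))
    (I : Ideal R) (f : Fin (d + 1) → R) (hfI : ∀ i, f i ∈ I)
    (hgen : I = Ideal.span (Set.range f) ⊔ I ^ 2) :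
    ∃ F : Fin (d + 1) → R,
      I = Ideal.span (Set.range F) ∧ ∀ i, F i - f i ∈ I ^ 2 := by
  classical
  set J : Ideal R := Ideal.span (Set.range f) with hJ
  set π : R →+* R ⧸ J := Ideal.Quotient.mk J with hπ
  have hπsurj : Function.Surjective π := Ideal.Quotient.mk_surjective
  set Ibar : Ideal (R ⧸ J) := I.map π with hIbar
  have hmap : Ibar = Ibar ^ 2 := by
    conv_lhs => rw [hIbar, hgen]
    rw [Ideal.map_sup, Ideal.map_pow, hπ, Ideal.map_quotient_self, bot_sup_eq, ← hπ, ← hIbar]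
  have hfg : Ibar.FG := IsNoetherian.noetherian _
  have hle : Ibar ≤ Ibar • Ibar := by
    rw [smul_eq_mul, ← pow_two, ← hmap]
  obtain ⟨r, hrI, hr⟩ :=
    Submodule.exists_mem_and_smul_eq_self_of_fg_of_le_smul Ibar Ibar hfg hle
  have hr2 : r ∈ Ideal.map π (I ^ 2) := by
    rw [Ideal.map_pow, ← hIbar, ← hmap]; exact hrI
  obtain ⟨e, heI2, hesp⟩ := (Ideal.mem_map_iff_of_surjective π hπsurj).mp hr2
  -- key property: x ∈ I → x - x*e ∈ J
  have hkey : ∀ x ∈ I, x - x * e ∈ J := by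
    intro x hx
    have hx' : π x ∈ Ibar := Ideal.mem_map_of_mem π hx
    have hrx := hr (π x) hx'
    rw [smul_eq_mul] at hrx
    have : π (x - x * e) = 0 := by
      rw [_root_.map_sub, _root_.map_mul, hesp, mul_comm, hrx, sub_self]
    rwa [hπ, Ideal.Quotient.eq_zero_iff_mem] at this
  -- the avoidance induction
  have key : ∀ t : ℕ, t ≤ d + 1 → ∃ g : Fin (d + 1) → R,
      (∀ i, ∃ c : R, g i = f i + c * e) ∧
      (∀ ch : LTSeries (PrimeSpectrum R),
        Ideal.span (g '' {i : Fin (d + 1) | (i : ℕ) < t}) ≤ ch.head.asIdeal →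
        e ∉ ch.last.asIdeal → ch.length + t ≤ d) := by
    intro t
    induction t with
    | zero =>
      intro _
      refine ⟨f, fun i => ⟨0, by ring⟩, fun ch _ _ => ?_⟩
      have h1 : (ch.length : WithBot ℕ∞) ≤ ringKrullDim R := Order.LTSeries.length_le_krullDim ch
      rw [hd] at h1
      have : ch.length ≤ d := by exact_mod_cast h1
      omega
    | succ t ih =>
      intro ht
      obtain ⟨g, hg, hinv⟩ := ih (by omega)
      set Kt : Ideal R := Ideal.span (g '' {i : Fin (d + 1) | (i : ℕ) < t}) with hKt
      have htlt : t < d + 1 := by omega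
      obtain ⟨μ, hμ⟩ := mk_coset_avoid Kt e (f ⟨t, htlt⟩)
      set it : Fin (d + 1) := ⟨t, htlt⟩ with hit
      set g' : Fin (d + 1) → R := Function.update g it (f it + μ * e) with hg'
      have hg'old : ∀ i : Fin (d + 1), (i : ℕ) < t → g' i = g i := by
        intro i hi
        have hne : i ≠ it := by
          intro h
          rw [h, hit] at hi
          exact absurd hi (lt_irrefl t)
        rw [hg', Function.update_of_ne hne]
      refine ⟨g', ?_, ?_⟩
      · intro i
        by_cases hi : i = it
        · subst hi
          exact ⟨μ, by rw [hg', Function.update_self]⟩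
        · rw [hg', Function.update_of_ne hi]
          exact hg i
      · intro ch hch helast
        haveI : ch.head.asIdeal.IsPrime := ch.head.2
        have hehead : e ∉ ch.head.asIdeal := by
          intro h
          exact helast (((PrimeSpectrum.asIdeal_le_asIdeal _ _).mpr ch.head_le_last) h)
        have hsub : Kt ≤ ch.head.asIdeal := by
          refine le_trans ?_ hch
          rw [hKt]
          apply Ideal.span_mono
          rintro x ⟨i, hi, rfl⟩
          have hi' : (i : ℕ) < t := hi
          exact ⟨i, show (i : ℕ) < t + 1 by omega, hg'old i hi'⟩
        obtain ⟨q, hqmin, hqle⟩ := Ideal.exists_minimalPrimes_le hsub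
        have hqprime : q.IsPrime := hqmin.1.1
        have heq : e ∉ q := fun h => hehead (hqle h)
        have hbq : f it + μ * e ∉ q := hμ q hqmin heq
        have hbhead : f it + μ * e ∈ ch.head.asIdeal := by
          apply hch
          apply Ideal.subset_span
          exact ⟨it, by simp [hit], by rw [hg', Function.update_self]⟩
        have hqlt : q < ch.head.asIdeal :=
          lt_of_le_of_ne hqle (by rintro rfl; exact hbq hbhead)
        set Q : PrimeSpectrum R := ⟨q, hqprime⟩ with hQ
        have hQlt : Q < ch.head := (PrimeSpectrum.asIdeal_lt_asIdeal _ _).mp hqlt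
        have := hinv (ch.cons Q hQlt)
          (by rw [RelSeries.head_cons]; exact hqmin.1.2)
          (by rw [RelSeries.last_cons]; exact helast)
        rw [RelSeries.cons_length] at this
        omega
  obtain ⟨b, hb, hbinv⟩ := key (d + 1) le_rfl
  set B : Ideal R := Ideal.span (Set.range b) with hB
  have hBrange : Ideal.span (b '' {i : Fin (d + 1) | (i : ℕ) < d + 1}) = B := by
    rw [hB]
    congr 1
    have : {i : Fin (d + 1) | (i : ℕ) < d + 1} = Set.univ := by
      ext i; simp [i.isLt]; omega
    rw [this, Set.image_univ]
  -- e is in the radical of B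
  have hrad : e ∈ B.radical := by
    rw [Ideal.radical_eq_sInf]
    apply Ideal.mem_sInf.mpr
    rintro p ⟨hBp, hpprime⟩
    by_contra hep
    have := hbinv (RelSeries.singleton _ (⟨p, hpprime⟩ : PrimeSpectrum R))
      (by rw [RelSeries.head_singleton, hBrange]; exact hBp)
      (by rw [RelSeries.last_singleton]; exact hep)
    simp [RelSeries.singleton_length] at this
  obtain ⟨n, hn⟩ : ∃ n : ℕ, e ^ n ∈ B := hrad
  -- I ≤ B ⊔ (e)
  have hJle : J ≤ B ⊔ Ideal.span {e} := by
    rw [hJ, Ideal.span_le]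
    rintro x ⟨i, rfl⟩
    obtain ⟨c, hc⟩ := hb i
    have hfi : f i = b i + (-c) * e := by rw [hc]; ring
    rw [hfi]
    exact Submodule.add_mem _
      (Ideal.mem_sup_left (Ideal.subset_span ⟨i, rfl⟩))
      (Ideal.mem_sup_right (Ideal.mul_mem_left _ _ (Ideal.subset_span rfl)))
  have hIle : I ≤ B ⊔ Ideal.span {e} := by
    intro x hx
    have hx2 : x = (x - x * e) + x * e := by ring
    rw [hx2]
    exact Submodule.add_mem _ (hJle (hkey x hx))
      (Ideal.mem_sup_right (Ideal.mul_mem_left _ _ (Ideal.subset_span rfl)))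
  -- e ∈ B ⊔ (e²)
  have hI2le : I ^ 2 ≤ B ⊔ Ideal.span {e ^ 2} := by
    refine le_trans (Ideal.pow_right_mono hIle 2) ?_
    rw [pow_two, Ideal.sup_mul, Ideal.mul_sup, Ideal.mul_sup]
    have h1 : B * B ≤ B := Ideal.mul_le_right
    have h2 : B * Ideal.span {e} ≤ B := Ideal.mul_le_left
    have h3 : Ideal.span {e} * B ≤ B := Ideal.mul_le_right
    have h4 : Ideal.span {e} * Ideal.span {e} = Ideal.span {e ^ 2} := by
      rw [Ideal.span_singleton_mul_span_singleton, ← pow_two]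
    refine sup_le (sup_le ?_ ?_) (sup_le ?_ ?_)
    · exact le_trans h1 le_sup_left
    · exact le_trans h2 le_sup_left
    · exact le_trans h3 le_sup_left
    · rw [h4]; exact le_sup_right
  have he2 : e ∈ B ⊔ Ideal.span {e ^ 2} := hI2le heI2
  obtain ⟨β, hβ, y, hy, hbeta⟩ := Submodule.mem_sup.mp he2
  obtain ⟨c, hc⟩ := Ideal.mem_span_singleton'.mp hy
  -- e(1 - ce) ∈ B
  have hBe1 : e * (1 - c * e) ∈ B := by
    have : e * (1 - c * e) = β := by linear_combination (-1 : R) * hbeta - hc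
    rw [this]; exact hβ
  -- geometric sum trick: e ∈ B
  have hgeo := geom_sum_mul (c * e) n
  have hmem1 : e * (1 - c * e) * (∑ i ∈ Finset.range n, (c * e) ^ i) ∈ B :=
    Ideal.mul_mem_right _ _ hBe1
  have hmem2 : c ^ n * e ^ n * e ∈ B :=
    Ideal.mul_mem_right _ _ (Ideal.mul_mem_left _ _ hn)
  have heB : e ∈ B := by
    have hid : e = e * (1 - c * e) * (∑ i ∈ Finset.range n, (c * e) ^ i)
        + c ^ n * e ^ n * e := by
      linear_combination e * hgeo
    rw [hid]
    exact Submodule.add_mem _ hmem1 hmem2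
  refine ⟨b, ?_, ?_⟩
  · apply le_antisymm
    · refine le_trans hIle (sup_le le_rfl ?_)
      rw [Ideal.span_le, Set.singleton_subset_iff]
      exact heB
    · rw [Ideal.span_le]
      rintro x ⟨i, rfl⟩
      obtain ⟨c', hc'⟩ := hb i
      rw [hc']
      exact I.add_mem (hfI i)
        (I.mul_mem_left _ (Ideal.pow_le_self two_ne_zero heI2))
  · intro i
    obtain ⟨c', hc'⟩ := hb i
    have : b i - f i = c' * e := by rw [hc']; ring
    rw [this]
    exact Ideal.mul_mem_left _ _ heI2
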